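/- For the Jacobi operator J(X) of the curvature tensor R = R(R¹,R²) from Lemma 2.1 (with R² the constant curvature +1 tensor), and any spacelike unit vector X, one has J(X)³ = 0 and J(X)² ≠ 0. Hence R is nilpotent of order exactly 3 on spacelike vectors. -/
import Mathlib


open scoped BigOperators

/-- Basis of `ℝ^{3s}`: `(0, a) = U_a`, `(1, a) = V_a`, `(2, a) = T_a`. -/
abbrev BasisIdx (s : ℕ) := Fin 3 × Fin s

/-- The basis vectors `U_a`, `V_a`, `T_a` of `ℝ^{3s}`. -/
def Uvec {s : ℕ} (a : Fin s) : BasisIdx s → ℝ := Pi.single ((0 : Fin 3), a) 1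
def Vvec {s : ℕ} (a : Fin s) : BasisIdx s → ℝ := Pi.single ((1 : Fin 3), a) 1
def Tvec {s : ℕ} (a : Fin s) : BasisIdx s → ℝ := Pi.single ((2 : Fin 3), a) 1

/-- Components of the metric of Lemma 2.1: `g(U_a,U_b) = g_{ab}`,
`g(U_a,V_b) = g(V_b,U_a) = δ_{ab}`, `g(T_a,T_b) = -δ_{ab}`, all else zero. -/
def Gmat {s : ℕ} (gm : Fin s → Fin s → ℝ) : BasisIdx s → BasisIdx s → ℝ :=
  fun x y =>
    if x.1 = 0 ∧ y.1 = 0 then gm x.2 y.2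
    else if (x.1 = 0 ∧ y.1 = 1) ∨ (x.1 = 1 ∧ y.1 = 0) then (if x.2 = y.2 then 1 else 0)
    else if x.1 = 2 ∧ y.1 = 2 then (if x.2 = y.2 then (-1 : ℝ) else 0)
    else 0

/-- The bilinear form determined by the metric components. -/
def gBil {s : ℕ} (gm : Fin s → Fin s → ℝ) (X Y : BasisIdx s → ℝ) : ℝ :=
  ∑ p, ∑ q, X p * Gmat gm p q * Y q

/-- The quadrilinear extension of a component tensor to vectors. -/
def ext {s : ℕ} (F : BasisIdx s → BasisIdx s → BasisIdx s → BasisIdx s → ℝ)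
    (x y z w : BasisIdx s → ℝ) : ℝ :=
  ∑ p, ∑ q, ∑ r, ∑ t, x p * y q * z r * w t * F p q r t

/-- A (component-level) algebraic curvature tensor. -/
def IsACT {ι : Type*} (F : ι → ι → ι → ι → ℝ) : Prop :=
  (∀ x y z w, F x y z w = - F y x z w) ∧
  (∀ x y z w, F x y z w = F z w x y) ∧
  (∀ x y z w, F x y z w + F y z x w + F z x y w = 0)

/-- `R²_{abcd} = δ_{ad}δ_{bc} - δ_{ac}δ_{bd}`, constant sectional curvature `+1`. -/
def R2const (s : ℕ) : Fin s → Fin s → Fin s → Fin s → ℝ :=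
  fun a b c d =>
    (if a = d then (1 : ℝ) else 0) * (if b = c then (1 : ℝ) else 0) -
      (if a = c then (1 : ℝ) else 0) * (if b = d then (1 : ℝ) else 0)

/-- The tensor of Lemma 2.1: `R(U_a,U_b,U_c,U_d) = R¹_{abcd}`, components with
exactly one `T` index equal `R²_{abcd}` (replacing the `T` index by the
corresponding `U` index), all else zero. -/
def bigR {s : ℕ} (R1 R2 : Fin s → Fin s → Fin s → Fin s → ℝ) :
    BasisIdx s → BasisIdx s → BasisIdx s → BasisIdx s → ℝ :=
  fun x y z w =>
    if x.1 = 0 ∧ y.1 = 0 ∧ z.1 = 0 ∧ w.1 = 0 then R1 x.2 y.2 z.2 w.2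
    else if (x.1 = 2 ∧ y.1 = 0 ∧ z.1 = 0 ∧ w.1 = 0) ∨ (x.1 = 0 ∧ y.1 = 2 ∧ z.1 = 0 ∧ w.1 = 0) ∨
            (x.1 = 0 ∧ y.1 = 0 ∧ z.1 = 2 ∧ w.1 = 0) ∨ (x.1 = 0 ∧ y.1 = 0 ∧ z.1 = 0 ∧ w.1 = 2)
      then R2 x.2 y.2 z.2 w.2
    else 0

section Aux

lemma f10 : (1:Fin 3) ≠ 0 := by decide
lemma f12 : (1:Fin 3) ≠ 2 := by decide
lemma f20 : (2:Fin 3) ≠ 0 := by decide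
lemma f21 : (2:Fin 3) ≠ 1 := by decide
lemma f01 : (0:Fin 3) ≠ 1 := by decide
lemma f02 : (0:Fin 3) ≠ 2 := by decide

lemma gBil_V' {s : ℕ} (gm : Fin s → Fin s → ℝ) (w : BasisIdx s → ℝ) (a : Fin s) :
    gBil gm w (Vvec a) = w (0, a) := by
  simp only [gBil, Vvec, Pi.single_apply, mul_ite, mul_one, mul_zero,
    Finset.sum_ite_eq', Finset.mem_univ, if_true]
  simp only [Gmat, Fintype.sum_prod_type, Fin.sum_univ_three]
  simp [f10, f12, f20, f21, f01, f02, Finset.sum_ite_eq', Finset.sum_ite_eq]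

lemma gBil_T' {s : ℕ} (gm : Fin s → Fin s → ℝ) (w : BasisIdx s → ℝ) (a : Fin s) :
    gBil gm w (Tvec a) = -w (2, a) := by
  simp only [gBil, Tvec, Pi.single_apply, mul_ite, mul_one, mul_zero,
    Finset.sum_ite_eq', Finset.mem_univ, if_true]
  simp only [Gmat, Fintype.sum_prod_type, Fin.sum_univ_three]
  simp [f10, f12, f20, f21, f01, f02, Finset.sum_ite_eq', Finset.sum_ite_eq]

lemma gBil_U' {s : ℕ} (gm : Fin s → Fin s → ℝ) (w : BasisIdx s → ℝ) (d : Fin s) :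
    gBil gm w (Uvec d) = (∑ a, w (0, a) * gm a d) + w (1, d) := by
  simp only [gBil, Uvec, Pi.single_apply, mul_ite, mul_one, mul_zero,
    Finset.sum_ite_eq', Finset.mem_univ, if_true]
  simp only [Gmat, Fintype.sum_prod_type, Fin.sum_univ_three]
  simp [f10, f12, f20, f21, f01, f02, Finset.sum_ite_eq', Finset.sum_ite_eq]

lemma gBil_self' {s : ℕ} (gm : Fin s → Fin s → ℝ) (X : BasisIdx s → ℝ)
    (h0 : ∀ a, X (0, a) = 0) : gBil gm X X = -∑ a, X (2, a) * X (2, a) := by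
  simp only [gBil, Gmat, Fintype.sum_prod_type, Fin.sum_univ_three]
  simp [f10, f12, f20, f21, f01, f02, h0, mul_ite, ite_mul, mul_one, mul_zero, zero_mul,
    mul_neg, Finset.sum_ite_eq', Finset.sum_ite_eq]

lemma ext_V' {s : ℕ} (R1 R2 : Fin s → Fin s → Fin s → Fin s → ℝ) (y X : BasisIdx s → ℝ)
    (a : Fin s) : ext (bigR R1 R2) y X X (Vvec a) = 0 := by
  simp only [ext, Vvec, Pi.single_apply, mul_ite, ite_mul, mul_one, mul_zero, zero_mul,
    Finset.sum_ite_eq', Finset.mem_univ, if_true]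
  simp [bigR, f10, f12, f20, f21, f01, f02]

lemma ext_zero' {s : ℕ} (R1 R2 : Fin s → Fin s → Fin s → Fin s → ℝ) (v X z : BasisIdx s → ℝ)
    (h0 : ∀ a, v (0, a) = 0) (h2 : ∀ a, v ((2 : Fin 3), a) = 0) :
    ext (bigR R1 R2) v X X z = 0 := by
  unfold ext
  refine Finset.sum_eq_zero fun p _ => Finset.sum_eq_zero fun q _ =>
    Finset.sum_eq_zero fun r _ => Finset.sum_eq_zero fun t _ => ?_
  obtain ⟨i, a⟩ := p
  fin_cases i
  · simp [h0 a]
  · simp [bigR, f10, f12]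
  · simp [h2 a]

set_option maxHeartbeats 1000000 in
lemma ext_T' {s : ℕ} (R1 : Fin s → Fin s → Fin s → Fin s → ℝ) (y X : BasisIdx s → ℝ)
    (d : Fin s) : ext (bigR R1 (R2const s)) y X X (Tvec d) =
      (∑ b, X (0, b) * X (0, b)) * y (0, d) - (∑ a, y (0, a) * X (0, a)) * X (0, d) := by
  simp only [ext, Tvec, Pi.single_apply, mul_ite, ite_mul, mul_one, mul_zero, zero_mul,
    Finset.sum_ite_eq', Finset.mem_univ, if_true]
  simp only [bigR, f20, f10, f12, f21, f01, f02, ne_eq, and_false, false_and, and_true,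
    if_false, or_false, false_or, and_self]
  simp only [Fintype.sum_prod_type, Fin.sum_univ_three]
  simp only [f10, f12, f20, f21, f01, f02, ne_eq, if_true, if_false, and_false, false_and,
    and_true, true_and, and_self, ite_true, ite_false, mul_zero, Finset.sum_const_zero,
    add_zero, zero_add, not_false_iff]
  have h2 : ∀ x x1 : Fin s, (∑ x2, if x1 = d then if x = x2 then
      y (0, x) * X (0, x1) * X (0, x2) else 0 else 0)
      = if x1 = d then y (0, x) * X (0, x1) * X (0, x) else 0 := by
    intro x x1
    split_ifs with h
    · simp [Finset.sum_ite_eq]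
    · simp
  simp only [R2const, mul_sub, Finset.sum_sub_distrib, mul_ite, ite_mul, mul_one, mul_zero,
    zero_mul, one_mul, Finset.sum_ite_eq, Finset.sum_ite_eq', Finset.mem_univ, if_true]
  have hA : (∑ x : Fin s, ∑ x1 : Fin s, if x = d then y (0, x) * X (0, x1) * X (0, x1) else 0)
      = ∑ x1 : Fin s, y (0, d) * X (0, x1) * X (0, x1) := by
    rw [Finset.sum_comm]
    simp [Finset.sum_ite_eq']
  rw [hA]
  simp only [h2, Finset.sum_ite_eq', Finset.mem_univ, if_true]
  rw [Finset.sum_mul, Finset.sum_mul]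
  congr 1 <;> exact Finset.sum_congr rfl fun a _ => by ring

set_option maxHeartbeats 1000000 in
lemma ext_U' {s : ℕ} (R1 : Fin s → Fin s → Fin s → Fin s → ℝ) (v X : BasisIdx s → ℝ)
    (hv : ∀ a, v (0, a) = 0) (d : Fin s) :
    ext (bigR R1 (R2const s)) v X X (Uvec d) =
      (∑ b, X (0, b) * X (0, b)) * v ((2 : Fin 3), d)
        - (∑ a, v ((2 : Fin 3), a) * X (0, a)) * X (0, d) := by
  simp only [ext, Uvec, Pi.single_apply, mul_ite, ite_mul, mul_one, mul_zero, zero_mul,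
    Finset.sum_ite_eq', Finset.mem_univ, if_true]
  simp only [bigR, f20, f10, f12, f21, f01, f02, ne_eq, and_false, false_and, and_true,
    if_false, or_false, false_or, and_self]
  simp only [Fintype.sum_prod_type, Fin.sum_univ_three]
  simp only [f10, f12, f20, f21, f01, f02, ne_eq, if_true, if_false, and_false, false_and,
    and_true, true_and, and_self, ite_true, ite_false, mul_zero, Finset.sum_const_zero,
    add_zero, zero_add, not_false_iff, hv, zero_mul, false_or, or_false, or_self, true_or,
    or_true]
  have h2 : ∀ x x1 : Fin s, (∑ x2, if x1 = d then if x = x2 then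
      v (2, x) * X (0, x1) * X (0, x2) else 0 else 0)
      = if x1 = d then v (2, x) * X (0, x1) * X (0, x) else 0 := by
    intro x x1
    split_ifs with h
    · simp [Finset.sum_ite_eq]
    · simp
  simp only [R2const, mul_sub, Finset.sum_sub_distrib, mul_ite, ite_mul, mul_one, mul_zero,
    zero_mul, one_mul, Finset.sum_ite_eq, Finset.sum_ite_eq', Finset.mem_univ, if_true]
  have hA : (∑ x : Fin s, ∑ x1 : Fin s, if x = d then v (2, x) * X (0, x1) * X (0, x1) else 0)
      = ∑ x1 : Fin s, v (2, d) * X (0, x1) * X (0, x1) := by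
    rw [Finset.sum_comm]
    simp [Finset.sum_ite_eq']
  rw [hA]
  simp only [h2, Finset.sum_ite_eq', Finset.mem_univ, if_true]
  rw [Finset.sum_mul, Finset.sum_mul]
  congr 1 <;> exact Finset.sum_congr rfl fun a _ => by ring

end Aux

/-- for the curvature tensor `R = R(R¹, R²)` of Lemma 2.1 with
`R²` the constant sectional curvature `+1` tensor and `s ≥ 2`, the Jacobi
operator `J(X)` of any spacelike unit vector `X` (characterized by
`g(J(X)y, z) = R(y, X, X, z)`) satisfies `J(X)³ = 0` and `J(X)² ≠ 0`:
`R` is nilpotent of order exactly `3` on spacelike vectors. -/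
theorem stmt5 (s : ℕ) (hs : 2 ≤ s) (gm : Fin s → Fin s → ℝ)
    (hgm : ∀ a b, gm a b = gm b a)
    (R1 : Fin s → Fin s → Fin s → Fin s → ℝ) (h1 : IsACT R1)
    (X : BasisIdx s → ℝ) (hX : gBil gm X X = 1)
    (J : Module.End ℝ (BasisIdx s → ℝ))
    (hJ : ∀ y z, gBil gm (J y) z = ext (bigR R1 (R2const s)) y X X z) :
    J ^ 3 = 0 ∧ J ^ 2 ≠ 0 := by
  have hJ0 : ∀ y (a : Fin s), J y (0, a) = 0 := by
    intro y a
    have h := hJ y (Vvec a)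
    rwa [gBil_V', ext_V'] at h
  set S : ℝ := ∑ b, X (0, b) * X (0, b) with hS
  have hJ2 : ∀ y (d : Fin s), J y ((2 : Fin 3), d)
      = -(S * y (0, d) - (∑ a, y (0, a) * X (0, a)) * X (0, d)) := by
    intro y d
    have h := hJ y (Tvec d)
    rw [gBil_T', ext_T'] at h
    linarith
  have hJJ2 : ∀ y (d : Fin s), J (J y) ((2 : Fin 3), d) = 0 := by
    intro y d
    rw [hJ2]
    simp [hJ0]
  constructor
  · -- J ^ 3 = 0
    apply LinearMap.ext
    intro y
    have h0c : ∀ a : Fin s, J (J (J y)) (0, a) = 0 := fun a => hJ0 _ a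
    have h2c : ∀ a : Fin s, J (J (J y)) ((2 : Fin 3), a) = 0 := fun a => hJJ2 (J y) a
    have h1c : ∀ a : Fin s, J (J (J y)) ((1 : Fin 3), a) = 0 := by
      intro a
      have h := hJ (J (J y)) (Uvec a)
      rw [gBil_U',
        ext_zero' _ _ _ _ _ (fun b => hJ0 (J y) b) (fun b => hJJ2 y b)] at h
      simpa [hJ0] using h
    have hys : (J ^ 3) y = J (J (J y)) := by
      simp [pow_succ, Module.End.mul_apply]
    rw [hys]
    show J (J (J y)) = 0
    funext p
    obtain ⟨i, a⟩ := p
    fin_cases i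
    · simpa using h0c a
    · simpa using h1c a
    · simpa using h2c a
  · -- J ^ 2 ≠ 0
    intro h2
    have hU0 : ∀ e a : Fin s, Uvec e ((0 : Fin 3), a) = if a = e then (1 : ℝ) else 0 := by
      intro e a
      simp [Uvec, Pi.single_apply, Prod.ext_iff]
    have hUdot : ∀ e : Fin s, (∑ b, Uvec e ((0 : Fin 3), b) * X (0, b)) = X (0, e) := by
      intro e
      simp [hU0, ite_mul, one_mul, zero_mul, Finset.sum_ite_eq']
    have hv2 : ∀ e a : Fin s, J (Uvec e) ((2 : Fin 3), a)
        = -(S * (if a = e then (1 : ℝ) else 0) - X (0, e) * X (0, a)) := by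
      intro e a
      rw [hJ2, hU0, hUdot]
    have hvdot : ∀ e : Fin s, (∑ a, J (Uvec e) ((2 : Fin 3), a) * X (0, a)) = 0 := by
      intro e
      have : ∀ a : Fin s, J (Uvec e) ((2 : Fin 3), a) * X (0, a)
          = -(S * ((if a = e then (1 : ℝ) else 0) * X (0, a))) + X (0, e) * (X (0, a) * X (0, a)) := by
        intro a
        rw [hv2]
        ring
      rw [Finset.sum_congr rfl fun a _ => this a, Finset.sum_add_distrib]
      have e1 : (∑ x : Fin s, -(S * ((if x = e then (1 : ℝ) else 0) * X (0, x))))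
          = -(S * X (0, e)) := by
        simp [ite_mul, mul_ite, mul_zero, mul_one, zero_mul, one_mul, Finset.sum_ite_eq']
      have e2 : (∑ x : Fin s, X (0, e) * (X (0, x) * X (0, x))) = X (0, e) * S := by
        rw [← Finset.mul_sum, ← hS]
      rw [e1, e2]
      ring
    have hJJzero : ∀ e : Fin s, J (J (Uvec e)) = 0 := by
      intro e
      have hpow : (J ^ 2) (Uvec e) = J (J (Uvec e)) := by
        simp [pow_succ, Module.End.mul_apply]
      rw [← hpow, h2]
      rfl
    have hkey : ∀ e d : Fin s, S * J (Uvec e) ((2 : Fin 3), d) = 0 := by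
      intro e d
      have h := hJ (J (Uvec e)) (Uvec d)
      rw [ext_U' _ _ _ (fun a => hJ0 _ a) d, hvdot, hJJzero e] at h
      have hz : gBil gm (0 : BasisIdx s → ℝ) (Uvec d) = 0 := by
        simp [gBil]
      rw [hz] at h
      rw [← hS] at h
      linarith
    have hdiag : ∀ e : Fin s, S * (-(S - X (0, e) * X (0, e))) = 0 := by
      intro e
      have h := hkey e e
      rw [hv2] at h
      simpa using h
    have hSz : S = 0 := by
      have hsum : (∑ e : Fin s, S * (-(S - X (0, e) * X (0, e)))) = 0 :=
        Finset.sum_eq_zero fun e _ => hdiag e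
      have hexp : (∑ e : Fin s, S * (-(S - X (0, e) * X (0, e))))
          = -(s : ℝ) * (S * S) + S * S := by
        have : ∀ e : Fin s, S * (-(S - X (0, e) * X (0, e)))
            = -(S * S) + S * (X (0, e) * X (0, e)) := by
          intro e; ring
        rw [Finset.sum_congr rfl fun e _ => this e, Finset.sum_add_distrib,
          Finset.sum_const, ← Finset.mul_sum, ← hS]
        simp only [Finset.card_univ, Fintype.card_fin, nsmul_eq_mul]
        ring
      rw [hexp] at hsum
      have hs2 : (2 : ℝ) ≤ (s : ℝ) := by exact_mod_cast hs
      nlinarith [sq_nonneg S]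
    have hu : ∀ a : Fin s, X (0, a) = 0 := by
      intro a
      have hnn : ∀ b ∈ Finset.univ, (0 : ℝ) ≤ X (0, b) * X (0, b) :=
        fun b _ => mul_self_nonneg _
      have hz := (Finset.sum_eq_zero_iff_of_nonneg hnn).1 (hS.symm.trans hSz) a
        (Finset.mem_univ a)
      exact mul_self_eq_zero.1 hz
    have hneg := gBil_self' gm X hu
    rw [hX] at hneg
    have hnn : (0 : ℝ) ≤ ∑ a, X (2, a) * X (2, a) :=
      Finset.sum_nonneg fun a _ => mul_self_nonneg _
    linarith
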